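/- Let J = (∂f_i/∂x_l) be the 2n×2n Jacobian matrix of smooth functions f₁,...,f_{2n} of variables x₁,...,x_{2n}, and define {f_i, f_l} = Σ_{j=1}^n (∂f_i/∂x_{2j−1} ∂f_l/∂x_{2j} − ∂f_i/∂x_{2j} ∂f_l/∂x_{2j−1}). Then det J = (1/(2ⁿ n!)) Σ_{σ∈S_{2n}} sign(σ) ∏_{j=1}^n {f_{σ(2j−1)}, f_{σ(2j)}}. Equivalently, as a statement about an arbitrary 2n×2n matrix J over a commutative ring: defining {i,l} = Σ_{j=1}^n (J_{i,2j−1} J_{l,2j} − J_{i,2j} J_{l,2j−1}), one has det J = (1/(2ⁿ n!)) Σ_{σ∈S_{2n}} sign(σ) ∏_{j=1}^n {σ(2j−1), σ(2j)}. -/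

import Mathlib

open Finset Equiv

def emb (n : ℕ) : Fin n × Bool ≃ Fin (2 * n) where
  toFun p := ⟨2 * p.1.1 + (if p.2 then 1 else 0), by
    rcases p with ⟨⟨j,hj⟩,b⟩; cases b <;> simp <;> omega⟩
  invFun m := (⟨m.1 / 2, by have := m.2; omega⟩, decide (m.1 % 2 = 1))
  left_inv := by rintro ⟨⟨j,hj⟩, b⟩; cases b <;> simp [Fin.ext_iff] <;> omega
  right_inv := by
    rintro ⟨m, hm⟩
    rcases Nat.mod_two_eq_zero_or_one m with h | h <;> simp [Fin.ext_iff, h] <;> omega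

theorem prod_pairs {M : Type*} [CommMonoid M] (n : ℕ) (g : Fin (2*n) → M) :
    ∏ m, g m = ∏ j : Fin n, (g (emb n (j,false)) * g (emb n (j,true))) := by
  rw [← (emb n).prod_comp g, Fintype.prod_prod_type]
  refine Finset.prod_congr rfl fun j _ => ?_
  rw [Fintype.prod_bool, mul_comm]

/-- the column-relabelling function attached to a choice `f`. -/
def colf {n : ℕ} (f : Fin n → Fin n × Bool) : Fin (2*n) → Fin (2*n) :=
  fun m => emb n ((f ((emb n).symm m).1).1, xor ((f ((emb n).symm m).1).2) (((emb n).symm m).2))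

theorem colf_false {n : ℕ} (f : Fin n → Fin n × Bool) (j : Fin n) :
    colf f (emb n (j, false)) = emb n (f j) := by
  simp [colf]

theorem colf_true {n : ℕ} (f : Fin n → Fin n × Bool) (j : Fin n) :
    colf f (emb n (j, true)) = emb n ((f j).1, !(f j).2) := by
  simp [colf]

theorem key {F : Type*} [Field F] (n : ℕ) (J : Matrix (Fin (2*n)) (Fin (2*n)) F) :
    ∑ σ : Equiv.Perm (Fin (2*n)), ((Equiv.Perm.sign σ : ℤ) : F) *
      ∏ j : Fin n, (∑ p : Fin n × Bool,
        (if p.2 then (-1:F) else 1) * J (σ (emb n (j,false))) (emb n p)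
          * J (σ (emb n (j,true))) (emb n (p.1, !p.2)))
    = (2^n * (n.factorial : F)) * J.det := by
  -- expand products of sums
  have h1 : ∀ σ : Equiv.Perm (Fin (2*n)),
      (∏ j : Fin n, (∑ p : Fin n × Bool,
        (if p.2 then (-1:F) else 1) * J (σ (emb n (j,false))) (emb n p)
          * J (σ (emb n (j,true))) (emb n (p.1, !p.2))))
      = ∑ f : Fin n → Fin n × Bool,
          (∏ j : Fin n, (if (f j).2 then (-1:F) else 1)) *
            ∏ m : Fin (2*n), J (σ m) (colf f m) := by
    intro σ
    rw [Fintype.prod_sum]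
    refine Finset.sum_congr rfl fun f _ => ?_
    rw [prod_pairs n (fun m => J (σ m) (colf f m))]
    rw [← Finset.prod_mul_distrib]
    refine Finset.prod_congr rfl fun j _ => ?_
    rw [colf_false, colf_true]
    ring
  simp_rw [h1, Finset.mul_sum]
  rw [Finset.sum_comm]
  -- each f-term is a determinant
  have h2 : ∀ f : Fin n → Fin n × Bool,
      (∑ σ : Equiv.Perm (Fin (2*n)), ((Equiv.Perm.sign σ : ℤ) : F) *
        ((∏ j : Fin n, (if (f j).2 then (-1:F) else 1)) * ∏ m : Fin (2*n), J (σ m) (colf f m)))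
      = (∏ j : Fin n, (if (f j).2 then (-1:F) else 1)) * (J.submatrix id (colf f)).det := by
    intro f
    rw [Matrix.det_apply', Finset.mul_sum]
    refine Finset.sum_congr rfl fun σ _ => ?_
    simp [Matrix.submatrix_apply]
    ring
  simp_rw [h2]
  -- reindex f by (k, ε)
  rw [← Equiv.sum_comp (Equiv.arrowProdEquivProdArrow (Fin n) (fun _ => Fin n) (fun _ => Bool)).symm, Fintype.sum_prod_type]
  have h3 : ∀ (k : Fin n → Fin n) (ε : Fin n → Bool),
      (Equiv.arrowProdEquivProdArrow (Fin n) (fun _ => Fin n) (fun _ => Bool)).symm (k, ε) = fun j => (k j, ε j) := by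
    intro k ε; rfl
  -- non-injective k contribute zero
  have hzero : ∀ (k : Fin n → Fin n) (ε : Fin n → Bool), ¬ Function.Injective k →
      (J.submatrix id (colf (fun j => (k j, ε j)))).det = 0 := by
    intro k ε hk
    rw [Function.not_injective_iff] at hk
    obtain ⟨a, b, hab, hne⟩ := hk
    refine Matrix.det_zero_of_column_eq (i := emb n (a, ε a)) (j := emb n (b, ε b)) ?_ ?_
    · simp [Fin.ext_iff, EmbeddingLike.apply_eq_iff_eq, Prod.ext_iff]
      intro h; exact absurd (Fin.ext h) hne
    · intro r
      simp only [Matrix.submatrix_apply, id_eq, colf, Equiv.symm_apply_apply, Bool.xor_self, hab]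
  -- injective k contribute det J
  have hinj : ∀ (k : Fin n → Fin n) (ε : Fin n → Bool), Function.Injective k →
      (∏ j : Fin n, (if ε j then (-1:F) else 1)) *
        (J.submatrix id (colf (fun j => (k j, ε j)))).det = J.det := by
    intro k ε hk
    set π : Equiv.Perm (Fin n) := Equiv.ofBijective k (Finite.injective_iff_bijective.mp hk) with hπ
    set σε : Fin n → Equiv.Perm Bool :=
      fun j => if ε j then Equiv.swap false true else Equiv.refl Bool with hσε
    set cperm : Equiv.Perm (Fin (2*n)) :=
      (emb n).permCongr ((Equiv.prodCongrRight σε).trans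
        (Equiv.prodCongrLeft (fun _ : Bool => π))) with hcperm
    have hcol : colf (fun j => (k j, ε j)) = ⇑cperm := by
      funext m
      simp only [colf, hcperm, Equiv.permCongr_apply, Equiv.trans_apply]
      obtain ⟨j, b⟩ := (emb n).symm m
      have hπk : π j = k j := rfl
      rcases hε : ε j <;> cases b <;>
        simp [hσε, hε, hπk, Equiv.prodCongrRight_apply, Equiv.prodCongrLeft_apply,
          Equiv.swap_apply_left, Equiv.swap_apply_right]
    rw [hcol, Matrix.det_permute']
    have hsign : Equiv.Perm.sign cperm = ∏ j : Fin n, (if ε j then (-1 : ℤˣ) else 1) := by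
      rw [hcperm, Equiv.Perm.sign_permCongr]
      have : ((Equiv.prodCongrRight σε).trans (Equiv.prodCongrLeft (fun _ : Bool => π)))
          = (Equiv.prodCongrLeft (fun _ : Bool => π)) * (Equiv.prodCongrRight σε) := rfl
      rw [this, map_mul, Equiv.Perm.sign_prodCongrLeft, Equiv.Perm.sign_prodCongrRight]
      rw [Fintype.prod_bool]
      simp only [← mul_assoc, Int.units_mul_self, one_mul]
      refine Finset.prod_congr rfl fun j _ => ?_
      rcases hε : ε j <;> simp [hσε, hε, Equiv.Perm.sign_swap]
    rw [hsign]
    push_cast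
    rw [← mul_assoc, ← Finset.prod_mul_distrib]
    have : ∀ j : Fin n, ((if ε j then (-1:F) else 1) * (if ε j then (-1:F) else 1)) = 1 := by
      intro j; rcases ε j <;> norm_num
    simp only [apply_ite (fun (u : ℤˣ) => ((u : ℤ) : F)), Units.val_neg, Units.val_one,
      Int.cast_neg, Int.cast_one]
    rw [Finset.prod_congr rfl (fun j _ => this j), Finset.prod_const_one, one_mul]
  -- put it together
  have h4 : ∀ k : Fin n → Fin n,
      (∑ ε : Fin n → Bool,
        (∏ j : Fin n, (if ((Equiv.arrowProdEquivProdArrow (Fin n) (fun _ => Fin n) (fun _ => Bool)).symm (k, ε) j).2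
            then (-1:F) else 1)) *
          (J.submatrix id (colf ((Equiv.arrowProdEquivProdArrow (Fin n) (fun _ => Fin n) (fun _ => Bool)).symm (k, ε)))).det)
      = if Function.Injective k then (2^n : F) * J.det else 0 := by
    intro k
    by_cases hk : Function.Injective k
    · simp only [hk, if_true, h3]
      rw [Finset.sum_congr rfl (fun ε _ => hinj k ε hk), Finset.sum_const]
      simp [Fintype.card_fun]
    · simp only [hk, if_false, h3]
      rw [Finset.sum_congr rfl (fun ε _ => by rw [hzero k ε hk, mul_zero]), Finset.sum_const,
        smul_zero]
  rw [Finset.sum_congr rfl (fun k _ => h4 k), Finset.sum_ite, Finset.sum_const, Finset.sum_const,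
    smul_zero, add_zero]
  have hcard : (Finset.univ.filter fun k : Fin n → Fin n => Function.Injective k).card
      = n.factorial := by
    rw [← Fintype.card_subtype]
    rw [Fintype.card_congr (Equiv.subtypeInjectiveEquivEmbedding (Fin n) (Fin n))]
    rw [Fintype.card_embedding_eq]
    simp [Nat.descFactorial_self]
  rw [hcard]
  rw [nsmul_eq_mul]
  push_cast
  ring

/-- Lemma `lembrackets`, matrix form: for a `2n × 2n` matrix `J` over a
field of characteristic zero, with the Poisson pairing of rows
`{i,l} = Σ_{j=1}^n (J_{i,2j−1} J_{l,2j} − J_{i,2j} J_{l,2j−1})`, one has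
`det J = (1/(2ⁿ n!)) Σ_{σ∈S_{2n}} sign(σ) ∏_{j=1}^n {σ(2j−1), σ(2j)}`. -/
theorem stmt3 {F : Type*} [Field F] [CharZero F] (n : ℕ) (hn : 0 < n)
    (J : Matrix (Fin (2 * n)) (Fin (2 * n)) F)
    (pb : Fin (2 * n) → Fin (2 * n) → F)
    (hpb : ∀ i l, pb i l = ∑ j : Fin n,
      (J i ⟨2 * j.1, by have := j.2; omega⟩ * J l ⟨2 * j.1 + 1, by have := j.2; omega⟩ -
       J i ⟨2 * j.1 + 1, by have := j.2; omega⟩ * J l ⟨2 * j.1, by have := j.2; omega⟩)) :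
    J.det =
      (1 / (2 ^ n * (Nat.factorial n) : F)) *
        ∑ σ : Equiv.Perm (Fin (2 * n)),
          (Equiv.Perm.sign σ : ℤ) •
            ∏ j : Fin n,
              pb (σ ⟨2 * j.1, by have := j.2; omega⟩) (σ ⟨2 * j.1 + 1, by have := j.2; omega⟩) := by
  have e0 : ∀ j : Fin n, (⟨2 * j.1, by have := j.2; omega⟩ : Fin (2*n)) = emb n (j, false) := by
    intro j; simp [emb, Fin.ext_iff]
  have e1 : ∀ j : Fin n, (⟨2 * j.1 + 1, by have := j.2; omega⟩ : Fin (2*n)) = emb n (j, true) := by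
    intro j; simp [emb, Fin.ext_iff]
  have hpb' : ∀ i l, pb i l = ∑ p : Fin n × Bool,
      (if p.2 then (-1:F) else 1) * J i (emb n p) * J l (emb n (p.1, !p.2)) := by
    intro i l
    rw [hpb, Fintype.sum_prod_type]
    refine Finset.sum_congr rfl fun k _ => ?_
    rw [Fintype.sum_bool, e0 k, e1 k]
    simp only [Bool.not_true, Bool.not_false, if_true, if_false]
    norm_num
    ring
  have hsum : (∑ σ : Equiv.Perm (Fin (2 * n)),
      (Equiv.Perm.sign σ : ℤ) •
        ∏ j : Fin n,
          pb (σ ⟨2 * j.1, by have := j.2; omega⟩) (σ ⟨2 * j.1 + 1, by have := j.2; omega⟩))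
      = (2^n * (n.factorial : F)) * J.det := by
    rw [← key n J]
    refine Finset.sum_congr rfl fun σ _ => ?_
    rw [zsmul_eq_mul]
    congr 1
    refine Finset.prod_congr rfl fun j _ => ?_
    rw [e0 j, e1 j, hpb']
  rw [hsum]
  have h2 : (2:F)^n * (n.factorial : F) ≠ 0 :=
    mul_ne_zero (pow_ne_zero _ two_ne_zero) (Nat.cast_ne_zero.mpr n.factorial_ne_zero)
  field_simp
  rw [mul_div_assoc, div_self (Nat.cast_ne_zero.mpr n.factorial_ne_zero), mul_one]
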